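/- Given a sequence R⃗ of pairwise commuting Pauli operators on N qubits, there exist a sequence S⃗ of n independent pairwise commuting Pauli operators generating the same group as R⃗, a sequence k⃗ of n distinct integers in {1,…,N}, and a map p:{1,…,n}→{0,1} such that for each i, S⃗ᵢ is the unique operator in S⃗ that anti-commutes with P_{k⃗ᵢ}^{[p(i)]}, where P_k^{[0]} := X_k and P_k^{[1]} := Z_k. -/

import Mathlib

/-- Pauli operators on `n` qubits modulo phases, encoded symplectically:
each qubit carries an (X-part, Z-part) pair in `ZMod 2`. Multiplication is addition. -/
abbrev Pauli (n : ℕ) : Type := Fin n → ZMod 2 × ZMod 2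

namespace Pauli

/-- The symplectic form encoding commutation: `0` iff the operators commute. -/
def sform {n : ℕ} (a b : Pauli n) : ZMod 2 :=
  ∑ i, ((a i).1 * (b i).2 + (a i).2 * (b i).1)

/-- Two Pauli operators commute. -/
def PComm {n : ℕ} (a b : Pauli n) : Prop := sform a b = 0

/-- The weight of a Pauli operator: number of qubits on which it acts non-trivially. -/
def weight {n : ℕ} (a : Pauli n) : ℕ :=
  (Finset.univ.filter fun i => a i ≠ 0).card

/-- `(a,b)` is a conjugal pair in relation to the set `X`: `a` and `b` anti-commute,
and each commutes with every member of `X` other than its partner. -/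
def ConjugalPair {n : ℕ} (a b : Pauli n) (X : Set (Pauli n)) : Prop :=
  ¬ PComm a b ∧ (∀ x ∈ X, x ≠ b → PComm a x) ∧ (∀ x ∈ X, x ≠ a → PComm b x)

/-- `e` is an undetectable error with respect to `S` acting on `l`:
it commutes with all of `S` and anti-commutes with `l`. -/
def UndetError {n : ℕ} (S : Set (Pauli n)) (l e : Pauli n) : Prop :=
  (∀ s ∈ S, PComm e s) ∧ ¬ PComm e l

/-- `ω S l`: minimum weight of an undetectable error w.r.t. `S` acting on `l`. -/
noncomputable def ω {n : ℕ} (S : Set (Pauli n)) (l : Pauli n) : ℕ :=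
  sInf (weight '' {e | UndetError S l e})

/-- Single-qubit Pauli X on qubit `k`. -/
def Xk {n : ℕ} (k : Fin n) : Pauli n := fun i => if i = k then (1, 0) else 0

/-- Single-qubit Pauli Z on qubit `k`. -/
def Zk {n : ℕ} (k : Fin n) : Pauli n := fun i => if i = k then (0, 1) else 0

/-- `Pk k false = X_k`, `Pk k true = Z_k`. -/
def Pk {n : ℕ} (k : Fin n) (p : Bool) : Pauli n := if p then Zk k else Xk k

/-- A finite set of Pauli operators is independent if no member is a product of the others. -/
def IndepSet {n : ℕ} (T : Finset (Pauli n)) : Prop :=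
  ∀ t ∈ T, t ∉ AddSubgroup.closure ((T.erase t : Finset (Pauli n)) : Set (Pauli n))

/-- `O` is an unimprovable set with respect to `S`. -/
def Unimprovable {n : ℕ} (S : Set (Pauli n)) (O : Finset (Pauli n)) : Prop :=
  ∀ X ⊆ O, ∀ h : X.Nonempty, ω S (∑ x ∈ X, x) = X.inf' h (fun x => ω S x)

/-- The unimprovable set `O` extends to `Q` (with respect to `S`). -/
def ExtendsTo {n : ℕ} (S : Set (Pauli n)) (O Q : Finset (Pauli n)) : Prop :=
  ∀ R ⊆ O ∪ Q, ∀ h : (R ∩ O).Nonempty,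
    ω S (∑ x ∈ R, x) ≤ (R ∩ O).inf' h (fun x => ω S x)

end Pauli

namespace Pauli
variable {n : ℕ}

lemma sform_add_left (a b c : Pauli n) : sform (a + b) c = sform a c + sform b c := by
  simp [sform, add_mul]; rw [← Finset.sum_add_distrib]; congr 1; ext i; ring

lemma sform_add_right (a b c : Pauli n) : sform a (b + c) = sform a b + sform a c := by
  simp [sform, mul_add]; rw [← Finset.sum_add_distrib]; congr 1; ext i; ring

lemma sform_zero_left (b : Pauli n) : sform 0 b = 0 := by simp [sform]
lemma sform_zero_right (a : Pauli n) : sform a 0 = 0 := by simp [sform]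
lemma sform_neg_left (a b : Pauli n) : sform (-a) b = sform a b := by
  have : -a = a := by funext i; ext <;> simp [CharTwo.neg_eq]
  rw [this]
lemma sform_comm (a b : Pauli n) : sform a b = sform b a := by
  simp [sform]; congr 1; ext i; ring
lemma sform_self (a : Pauli n) : sform a a = 0 := by
  simp [sform]; rw [Finset.sum_congr rfl (fun i _ => ?_)]
  · exact Finset.sum_const_zero
  · ring_nf
    rw [show (2:ZMod 2) = 0 from by decide, mul_zero]
lemma sform_smul_left (c : ZMod 2) (a b : Pauli n) : sform (c • a) b = c * sform a b := by
  simp [sform, Finset.mul_sum]; congr 1; ext i; ring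

lemma sform_sum_left {ι : Type*} (s : Finset ι) (f : ι → Pauli n) (b : Pauli n) :
    sform (∑ i ∈ s, f i) b = ∑ i ∈ s, sform (f i) b := by
  classical
  induction s using Finset.induction with
  | empty => simp [sform_zero_left]
  | insert _ _ h ih => simp [Finset.sum_insert h, sform_add_left, ih]

lemma sform_Xk (a : Pauli n) (k : Fin n) : sform a (Xk k) = (a k).2 := by
  simp [sform, Xk]
  rw [Finset.sum_eq_single k] <;> simp +contextual [Prod.ext_iff]

lemma sform_Zk (a : Pauli n) (k : Fin n) : sform a (Zk k) = (a k).1 := by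
  simp [sform, Zk]
  rw [Finset.sum_eq_single k] <;> simp +contextual [Prod.ext_iff]

lemma sform_Pk (a : Pauli n) (k : Fin n) (b : Bool) :
    sform a (Pk k b) = if b then (a k).1 else (a k).2 := by
  cases b <;> simp [Pk, sform_Xk, sform_Zk]

lemma sform_eq_zero_of_mem_closure {T : Set (Pauli n)} {v a : Pauli n}
    (h : ∀ t ∈ T, sform t v = 0) (ha : a ∈ AddSubgroup.closure T) : sform a v = 0 := by
  induction ha using AddSubgroup.closure_induction with
  | mem t ht => exact h t ht
  | zero => exact sform_zero_left v
  | add x y _ _ hx hy => rw [sform_add_left, hx, hy, add_zero]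
  | neg x _ hx => rw [sform_neg_left]; exact hx

lemma pcomm_closure {T : Set (Pauli n)} (h : ∀ a ∈ T, ∀ b ∈ T, sform a b = 0)
    {a b : Pauli n} (ha : a ∈ AddSubgroup.closure T) (hb : b ∈ AddSubgroup.closure T) :
    sform a b = 0 := by
  refine sform_eq_zero_of_mem_closure (fun t ht => ?_) ha
  rw [sform_comm]
  exact sform_eq_zero_of_mem_closure (fun u hu => h u hu t ht) hb
variable {N : ℕ}

lemma zmod_smul_mem {H : AddSubgroup (Pauli N)} (c : ZMod 2) {x : Pauli N} (hx : x ∈ H) :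
    c • x ∈ H := by
  have hc : c = 0 ∨ c = 1 := by revert c; decide
  rcases hc with h | h <;> subst h
  · simpa using H.zero_mem
  · simpa using hx

set_option maxHeartbeats 1000000 in
lemma aux (R : List (Pauli N)) (hR : ∀ r ∈ R, ∀ r' ∈ R, sform r r' = 0) :
    ∃ (S : List (Pauli N)) (k : List (Fin N)) (pl : List Bool),
      S.length = k.length ∧ k.length = pl.length ∧ k.Nodup ∧
      (∀ j (hj : j < S.length) i (hik : i < k.length) (hip : i < pl.length),
        sform (S[j]) (Pk (k[i]) (pl[i])) = if j = i then 1 else 0) ∧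
      AddSubgroup.closure {x | x ∈ S} = AddSubgroup.closure {x | x ∈ R} := by
  induction R with
  | nil =>
    exact ⟨[], [], [], rfl, rfl, List.nodup_nil,
      by intro j hj; exact absurd hj (Nat.not_lt_zero j), rfl⟩
  | cons r rest ih =>
    obtain ⟨S, k, pl, hSk, hkp, hnd, hδ, hcl⟩ :=
      ih (fun a ha b hb => hR a (List.mem_cons_of_mem _ ha) b (List.mem_cons_of_mem _ hb))
    have hsub : ∀ s ∈ S, s ∈ AddSubgroup.closure {x | x ∈ rest} := fun s hs => by
      rw [← hcl]; exact AddSubgroup.subset_closure hs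
    have hrS : ∀ s ∈ S, sform r s = 0 := fun s hs => by
      rw [sform_comm]
      exact sform_eq_zero_of_mem_closure
        (fun t ht => hR t (List.mem_cons_of_mem _ ht) r (List.mem_cons_self)) (hsub s hs)
    have hSS : ∀ s ∈ S, ∀ s' ∈ S, sform s s' = 0 := fun s hs s' hs' =>
      pcomm_closure (fun a ha b hb =>
        hR a (List.mem_cons_of_mem _ ha) b (List.mem_cons_of_mem _ hb))
        (hsub s hs) (hsub s' hs')
    -- index-function versions
    set kf : Fin S.length → Fin N := fun i => k.get (Fin.cast hSk i) with hkf
    set pf : Fin S.length → Bool := fun i => pl.get (Fin.cast (hSk.trans hkp) i) with hpf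
    set Sf : Fin S.length → Pauli N := S.get with hSf
    have hδ' : ∀ j i : Fin S.length, sform (Sf j) (Pk (kf i) (pf i)) = if j = i then 1 else 0 := by
      intro j i
      have h := hδ j j.isLt i (hSk ▸ i.isLt) ((hSk.trans hkp) ▸ i.isLt)
      simpa [hSf, hkf, hpf, Fin.ext_iff] using h
    set c : Fin S.length → ZMod 2 := fun i => sform r (Pk (kf i) (pf i)) with hc
    set r' : Pauli N := r + ∑ i, c i • Sf i with hr'
    have h1 : ∀ i : Fin S.length, sform r' (Pk (kf i) (pf i)) = 0 := by
      intro i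
      rw [hr', sform_add_left, sform_sum_left]
      simp only [sform_smul_left, hδ', mul_ite, mul_one, mul_zero]
      rw [Finset.sum_ite_eq' Finset.univ i c]
      simp [hc, CharTwo.add_self_eq_zero]
    have hr'S : ∀ s ∈ S, sform r' s = 0 := by
      intro s hs
      rw [hr', sform_add_left, sform_sum_left, hrS s hs]
      simp only [sform_smul_left]
      rw [Finset.sum_eq_zero (fun i _ => by
        rw [hSS (Sf i) (List.get_mem S _) s hs, mul_zero])]
      simp
    have h1' : ∀ i (hik : i < k.length) (hip : i < pl.length),
        sform r' (Pk (k[i]) (pl[i])) = 0 := by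
      intro i hik hip
      have h := h1 ⟨i, hSk ▸ hik⟩
      simpa [hkf, hpf] using h
    by_cases hz : r' = 0
    · have hrmem : r ∈ AddSubgroup.closure {x | x ∈ S} := by
        have hre : r = -∑ i, c i • Sf i := by
          have : r + ∑ i, c i • Sf i = 0 := by rw [← hr']; exact hz
          linear_combination (norm := abel) this
        rw [hre]
        exact neg_mem (sum_mem fun i _ =>
          zmod_smul_mem _ (AddSubgroup.subset_closure (List.get_mem S _)))
      refine ⟨S, k, pl, hSk, hkp, hnd, hδ, ?_⟩
      rw [hcl]
      apply le_antisymm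
      · exact AddSubgroup.closure_mono (fun x hx => List.mem_cons_of_mem _ hx)
      · rw [AddSubgroup.closure_le]
        rintro x hx
        rcases List.mem_cons.mp hx with h | h
        · subst h; rw [hcl] at hrmem; exact hrmem
        · exact AddSubgroup.subset_closure h
    · -- r' ≠ 0 : find a pivot qubit outside k
      have key : ∀ (hq : ∀ q : Fin N, q ∉ k → r' q = 0) (i : Fin S.length),
          sform r' (Pk (kf i) (!pf i)) = 0 := by
        intro hq i
        have hinj : Function.Injective kf := by
          intro a b hab
          have h2 := (List.nodup_iff_injective_get.mp hnd) hab
          simpa [Fin.ext_iff] using h2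
        have hsupp : ∀ q : Fin N, r' q ≠ 0 → q ∈ Finset.univ.image kf := by
          intro q hq'
          have hqk : q ∈ k := by
            by_contra h; exact hq' (hq q h)
          obtain ⟨m, hm⟩ := List.get_of_mem hqk
          exact Finset.mem_image.mpr ⟨Fin.cast hSk.symm m, Finset.mem_univ _, hm⟩
        have step : ∀ m : Fin S.length,
            (r' (kf m)).1 * (Sf i (kf m)).2 + (r' (kf m)).2 * (Sf i (kf m)).1
              = if i = m then (if pf m then (r' (kf m)).2 else (r' (kf m)).1) else 0 := by
          intro m
          have e0 : sform r' (Pk (kf m) (pf m)) = 0 := h1 m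
          have eδ : sform (Sf i) (Pk (kf m) (pf m)) = if i = m then 1 else 0 := hδ' i m
          rw [sform_Pk] at e0 eδ
          cases hb : pf m <;> rw [hb] at e0 eδ <;> simp only [if_true, if_false,
            Bool.false_eq_true, Bool.true_eq_false] at e0 eδ ⊢
          · rw [e0, eδ]; split <;> ring
          · rw [e0, eδ]; split <;> ring
        have hzero : sform r' (Sf i) = 0 := hr'S _ (List.get_mem S _)
        calc sform r' (Pk (kf i) (!pf i))
            = if i = i then (if pf i then (r' (kf i)).2 else (r' (kf i)).1) else 0 := by
              rw [sform_Pk]; cases pf i <;> simp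
          _ = ∑ m : Fin S.length,
              if i = m then (if pf m then (r' (kf m)).2 else (r' (kf m)).1) else 0 := by
              rw [Finset.sum_ite_eq Finset.univ i]; simp
          _ = ∑ m : Fin S.length,
              ((r' (kf m)).1 * (Sf i (kf m)).2 + (r' (kf m)).2 * (Sf i (kf m)).1) :=
              (Finset.sum_congr rfl fun m _ => step m).symm
          _ = ∑ q ∈ Finset.univ.image kf,
              ((r' q).1 * (Sf i q).2 + (r' q).2 * (Sf i q).1) := by
              rw [Finset.sum_image (fun a _ b _ h => hinj h)]
          _ = sform r' (Sf i) := by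
              rw [sform]
              exact Finset.sum_subset (Finset.subset_univ _) (fun q _ hq' => by
                have hq0 : r' q = 0 := by
                  by_contra h0; exact hq' (hsupp q h0)
                simp [hq0])
          _ = 0 := hzero
      have hpiv : ∃ q : Fin N, q ∉ k ∧ r' q ≠ 0 := by
        by_contra hcon
        push_neg at hcon
        apply hz
        funext q
        by_cases hqk : q ∈ k
        · obtain ⟨m, hm⟩ := List.get_of_mem hqk
          set i : Fin S.length := Fin.cast hSk.symm m with hi
          have hkfi : kf i = q := hm
          have e1 : sform r' (Pk q (pf i)) = 0 := by rw [← hkfi]; exact h1 i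
          have e2 : sform r' (Pk q (!pf i)) = 0 := by
            rw [← hkfi]
            exact key (fun q hq => hcon q hq) i
          rw [sform_Pk] at e1 e2
          cases hb : pf i <;> rw [hb] at e1 e2 <;>
            simp only [Bool.not_true, Bool.not_false, if_true, if_false,
              Bool.false_eq_true, Bool.true_eq_false] at e1 e2
          · exact Prod.ext e2 e1
          · exact Prod.ext e1 e2
        · exact hcon q hqk
      obtain ⟨q, hqk, hq0⟩ := hpiv
      have hbex : ∃ b : Bool, sform r' (Pk q b) = 1 := by
        have h01 : (r' q).1 ≠ 0 ∨ (r' q).2 ≠ 0 := by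
          by_contra h
          push_neg at h
          exact hq0 (Prod.ext h.1 h.2)
        have hone : ∀ x : ZMod 2, x ≠ 0 → x = 1 := by decide
        rcases h01 with h | h
        · exact ⟨true, by rw [sform_Pk]; simpa using hone _ h⟩
        · exact ⟨false, by rw [sform_Pk]; simpa using hone _ h⟩
      obtain ⟨b, hb1⟩ := hbex
      refine ⟨S.map (fun s => s + sform s (Pk q b) • r') ++ [r'], k ++ [q], pl ++ [b],
        by simp [hSk], by simp [hkp], ?_, ?_, ?_⟩
      · rw [List.nodup_append]
        exact ⟨hnd, List.nodup_singleton q, by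
          intro a ha b' hb'
          simp only [List.mem_singleton] at hb'
          subst hb'
          rintro rfl
          exact hqk ha⟩
      · -- the delta property
        intro j hj i hik hip
        simp only [List.length_append, List.length_map, List.length_singleton] at hj hik hip
        have hkn : k.length = S.length := hSk.symm
        have hpn : pl.length = S.length := by omega
        rcases Nat.lt_or_ge j S.length with hjn | hjn <;>
          rcases Nat.lt_or_ge i S.length with hin | hin
        · -- j < n, i < n
          have hgj : (S.map (fun s => s + sform s (Pk q b) • r') ++ [r'])[j]'(by simp; omega)
              = S[j] + sform (S[j]) (Pk q b) • r' := by
            rw [List.getElem_append_left (by simpa using hjn), List.getElem_map]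
          have hgi : (k ++ [q])[i]'(by simp; omega) = k[i] :=
            List.getElem_append_left (by omega)
          have hgi' : (pl ++ [b])[i]'(by simp; omega) = pl[i] :=
            List.getElem_append_left (by omega)
          rw [hgj, hgi, hgi', sform_add_left, sform_smul_left,
            hδ j hjn i (by omega) (by omega), h1' i (by omega) (by omega), mul_zero, add_zero]
        · -- j < n, i = n
          have hieq : i = k.length := by omega
          have hgj : (S.map (fun s => s + sform s (Pk q b) • r') ++ [r'])[j]'(by simp; omega)
              = S[j] + sform (S[j]) (Pk q b) • r' := by
            rw [List.getElem_append_left (by simpa using hjn), List.getElem_map]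
          have hgi : (k ++ [q])[i]'(by simp; omega) = q := by
            rw [List.getElem_append_right (by omega)]
            simp [hieq]
          have hgi' : (pl ++ [b])[i]'(by simp; omega) = b := by
            rw [List.getElem_append_right (by omega)]
            simp [hieq, hpn, hkn]
          rw [hgj, hgi, hgi', sform_add_left, sform_smul_left, hb1, mul_one,
            CharTwo.add_self_eq_zero, if_neg (by omega)]
        · -- j = n, i < n
          have hjeq : j = S.length := by omega
          have hgj : (S.map (fun s => s + sform s (Pk q b) • r') ++ [r'])[j]'(by simp; omega)
              = r' := by
            rw [List.getElem_append_right (by simp; omega)]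
            simp [hjeq]
          have hgi : (k ++ [q])[i]'(by simp; omega) = k[i] :=
            List.getElem_append_left (by omega)
          have hgi' : (pl ++ [b])[i]'(by simp; omega) = pl[i] :=
            List.getElem_append_left (by omega)
          rw [hgj, hgi, hgi', h1' i (by omega) (by omega), if_neg (by omega)]
        · -- j = n, i = n
          have hjeq : j = S.length := by omega
          have hieq : i = k.length := by omega
          have hgj : (S.map (fun s => s + sform s (Pk q b) • r') ++ [r'])[j]'(by simp; omega)
              = r' := by
            rw [List.getElem_append_right (by simp; omega)]
            simp [hjeq]
          have hgi : (k ++ [q])[i]'(by simp; omega) = q := by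
            rw [List.getElem_append_right (by omega)]
            simp [hieq]
          have hgi' : (pl ++ [b])[i]'(by simp; omega) = b := by
            rw [List.getElem_append_right (by omega)]
            simp [hieq, hpn, hkn]
          rw [hgj, hgi, hgi', hb1, if_pos (by omega)]
      · -- closure equality
        have hrmem : r ∈ AddSubgroup.closure {x | x ∈ (r :: rest)} :=
          AddSubgroup.subset_closure (List.mem_cons_self)
        have hrestle : AddSubgroup.closure {x | x ∈ S}
            ≤ AddSubgroup.closure {x | x ∈ (r :: rest)} := by
          rw [hcl]
          exact AddSubgroup.closure_mono (fun x hx => List.mem_cons_of_mem _ hx)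
        have hr'mem : r' ∈ AddSubgroup.closure {x | x ∈ (r :: rest)} := by
          rw [hr']
          exact add_mem hrmem (sum_mem fun i _ =>
            zmod_smul_mem _ (hrestle (AddSubgroup.subset_closure (List.get_mem S _))))
        have hr'new : r' ∈ AddSubgroup.closure
            {x | x ∈ S.map (fun s => s + sform s (Pk q b) • r') ++ [r']} :=
          AddSubgroup.subset_closure (by simp)
        have hSnew : ∀ s ∈ S, s ∈ AddSubgroup.closure
            {x | x ∈ S.map (fun s => s + sform s (Pk q b) • r') ++ [r']} := by
          intro s hs
          have hf : s + sform s (Pk q b) • r' ∈ AddSubgroup.closure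
              {x | x ∈ S.map (fun s => s + sform s (Pk q b) • r') ++ [r']} :=
            AddSubgroup.subset_closure (by
              simp only [Set.mem_setOf_eq, List.mem_append, List.mem_map]
              exact Or.inl ⟨s, hs, rfl⟩)
          have : s = (s + sform s (Pk q b) • r') - sform s (Pk q b) • r' := by abel
          rw [this]
          exact sub_mem hf (zmod_smul_mem _ hr'new)
        apply le_antisymm
        · rw [AddSubgroup.closure_le]
          rintro x hx
          simp only [Set.mem_setOf_eq, List.mem_append, List.mem_map,
            List.mem_singleton] at hx
          rcases hx with ⟨s, hs, rfl⟩ | rfl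
          · exact add_mem (hrestle (AddSubgroup.subset_closure hs)) (zmod_smul_mem _ hr'mem)
          · exact hr'mem
        · rw [AddSubgroup.closure_le]
          rintro x hx
          simp only [Set.mem_setOf_eq, List.mem_cons] at hx
          rcases hx with rfl | hx
          · have : x = r' - ∑ i, c i • Sf i := by rw [hr']; abel
            rw [this]
            exact sub_mem hr'new (sum_mem fun i _ =>
              zmod_smul_mem _ (hSnew _ (List.get_mem S _)))
          · have hle : AddSubgroup.closure {x | x ∈ rest} ≤ AddSubgroup.closure
                {x | x ∈ S.map (fun s => s + sform s (Pk q b) • r') ++ [r']} := by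
              rw [← hcl, AddSubgroup.closure_le]
              exact fun s hs => hSnew s hs
            exact hle (AddSubgroup.subset_closure hx)
end Pauli

/-- Gaussian elimination for Pauli operators: from any commuting sequence `R`
one obtains an independent commuting sequence `S` generating the same group, together with
distinct qubit indices `k` and a map `p` to `{X(=false), Z(=true)}` such that `S i` is the unique
member of `S` anti-commuting with `P_{k i}^{[p i]}`. -/
theorem stmt17 {N : ℕ} (R : List (Pauli N))
    (hR : ∀ r ∈ R, ∀ r' ∈ R, Pauli.PComm r r') :
    ∃ (S : List (Pauli N)) (k : List (Fin N)) (p : ℕ → Bool),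
      S.length = k.length ∧ k.Nodup ∧
      (∀ s ∈ S, ∀ s' ∈ S, Pauli.PComm s s') ∧
      (∀ i (hi : i < S.length),
        S.get ⟨i, hi⟩ ∉ AddSubgroup.closure
          {x | ∃ j, ∃ hj : j < S.length, j ≠ i ∧ S.get ⟨j, hj⟩ = x}) ∧
      AddSubgroup.closure {x | x ∈ S} = AddSubgroup.closure {x | x ∈ R} ∧
      (∀ i (hi : i < S.length) (hik : i < k.length),
        ¬ Pauli.PComm (S.get ⟨i, hi⟩) (Pauli.Pk (k.get ⟨i, hik⟩) (p i)) ∧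
        ∀ j (hj : j < S.length),
          ¬ Pauli.PComm (S.get ⟨j, hj⟩) (Pauli.Pk (k.get ⟨i, hik⟩) (p i)) → j = i) := by
  classical
  obtain ⟨S, k, pl, hSk, hkp, hnd, hδ, hcl⟩ :=
    Pauli.aux R (fun a ha b hb => hR a ha b hb)
  refine ⟨S, k, fun i => pl.getD i false, hSk, hnd, ?_, ?_, hcl, ?_⟩
  · intro s hs s' hs'
    have hs1 : s ∈ AddSubgroup.closure {x | x ∈ R} := by
      rw [← hcl]; exact AddSubgroup.subset_closure hs
    have hs2 : s' ∈ AddSubgroup.closure {x | x ∈ R} := by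
      rw [← hcl]; exact AddSubgroup.subset_closure hs'
    exact Pauli.pcomm_closure (fun a ha b hb => hR a ha b hb) hs1 hs2
  · intro i hi hmem
    have hik : i < k.length := hSk ▸ hi
    have hip : i < pl.length := hkp ▸ hik
    have h0 : Pauli.sform (S.get ⟨i, hi⟩) (Pauli.Pk (k[i]) (pl[i])) = 0 := by
      refine Pauli.sform_eq_zero_of_mem_closure (fun t ht => ?_) hmem
      obtain ⟨j, hj, hji, rfl⟩ := ht
      have h := hδ j hj i hik hip
      rw [if_neg hji] at h
      simpa using h
    have h1 : Pauli.sform (S.get ⟨i, hi⟩) (Pauli.Pk (k[i]) (pl[i])) = 1 := by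
      have h := hδ i hi i hik hip
      rw [if_pos rfl] at h
      simpa using h
    rw [h0] at h1
    exact zero_ne_one h1
  · intro i hi hik
    have hip : i < pl.length := hkp ▸ hik
    have hp : pl.getD i false = pl[i] := List.getD_eq_getElem pl false hip
    constructor
    · intro hc
      have h := hδ i hi i hik hip
      rw [if_pos rfl] at h
      have hc' : Pauli.sform S[i] (Pauli.Pk k[i] pl[i]) = 0 := by
        simpa [Pauli.PComm, List.getElem?_eq_getElem hip] using hc
      rw [hc'] at h
      exact zero_ne_one h
    · intro j hj hanc
      by_contra hne
      apply hanc
      have h := hδ j hj i hik hip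
      rw [if_neg hne] at h
      simpa [Pauli.PComm, List.getElem?_eq_getElem hip] using h
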